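/- Let β : ℤ → ℝ with β(k) > 0 for all k. Define on the weighted space H = ℓ²(ℤ²) the operator D_β by (D_β f)(n,k) = (β(k+n) + β(-k))·f(n,k), and Θ by (Θf)(n,k) = f(n,-k-n). For every f ∈ H supported on {(n,k) : n+2k ≥ 0} such that g defined by g(n,k) = f(n,k)/(β(k+n)+β(-k)) lies in H, one has ⟨Θf, g⟩ = (1/2)·∑_{n even} |f(n, -n/2)|²·β(n/2)^{-1} ≥ 0. -/

import Mathlib

set_option maxHeartbeats 1000000


/-- invariant-case reflection positivity on the quantum cylinder.
With `β > 0`, `Θ` the reflection of `ℓ²(ℤ²)`, `f` supported on `{n+2k ≥ 0}` and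
`g = D_β⁻¹ f ∈ ℓ²` (i.e. `g(n,k) = f(n,k)/(β(k+n)+β(-k))`), we have
`⟨Θf, g⟩ = (1/2) ∑_{n even} |f(n,-n/2)|² β(n/2)⁻¹ ≥ 0`. -/
theorem reflection_positivity_invariant_cylinder (β : ℤ → ℝ)
    (hβ : ∀ k : ℤ, 0 < β k)
    (Θ : lp (fun _ : ℤ × ℤ => ℂ) 2 →L[ℂ] lp (fun _ : ℤ × ℤ => ℂ) 2)
    (hΘ : ∀ (f : lp (fun _ : ℤ × ℤ => ℂ) 2) (n k : ℤ), (Θ f) (n, k) = f (n, -k - n))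
    (f g : lp (fun _ : ℤ × ℤ => ℂ) 2)
    (hf : ∀ n k : ℤ, n + 2 * k < 0 → f (n, k) = 0)
    (hg : ∀ n k : ℤ, g (n, k) = f (n, k) / ((β (k + n) + β (-k) : ℝ) : ℂ)) :
    inner (𝕜 := ℂ) (Θ f) g =
      (((1 / 2) * ∑' n : ℤ, (if Even n then ‖f (n, -(n / 2))‖ ^ 2 * (β (n / 2))⁻¹ else 0) : ℝ) : ℂ) ∧
    0 ≤ (1 / 2) * ∑' n : ℤ, (if Even n then ‖f (n, -(n / 2))‖ ^ 2 * (β (n / 2))⁻¹ else 0) := by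
  have key : ∀ n k : ℤ, n + 2 * k ≠ 0 →
      (inner ℂ ((Θ f) (n, k)) (g (n, k)) : ℂ) = 0 := by
    intro n k h
    rcases lt_or_gt_of_ne h with h' | h'
    · have : f (n, k) = 0 := hf n k h'
      rw [hg, this, zero_div, inner_zero_right]
    · have : n + 2 * (-k - n) < 0 := by omega
      rw [hΘ, hf n (-k - n) this, inner_zero_left]
  have hsum : Summable fun p : ℤ × ℤ => (inner ℂ ((Θ f) p) (g p) : ℂ) :=
    lp.summable_inner (Θ f) g
  have hinner : inner (𝕜 := ℂ) (Θ f) g =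
      ∑' n : ℤ, ∑' k : ℤ, (inner ℂ ((Θ f) (n, k)) (g (n, k)) : ℂ) := by
    rw [lp.inner_eq_tsum, ← Summable.tsum_prod' hsum (fun b => hsum.prod_factor b)]
  have hrow : ∀ n : ℤ, (∑' k : ℤ, (inner ℂ ((Θ f) (n, k)) (g (n, k)) : ℂ)) =
      ((if Even n then ‖f (n, -(n / 2))‖ ^ 2 * (β (n / 2))⁻¹ else 0 : ℝ) * (1 / 2) : ℝ) := by
    intro n
    by_cases hn : Even n
    · obtain ⟨m, hm⟩ := hn
      have hm2 : n = 2 * m := by omega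
      have hdiv : n / 2 = m := by rw [hm2, Int.mul_ediv_cancel_left _ (by norm_num)]
      rw [tsum_eq_single (-m) (by intro k hk; exact key n k (by omega))]
      have hneg : -(-m) - n = -m := by omega
      rw [hΘ, hneg, hg]
      have h1 : -m + n = m := by omega
      have h2 : -(-m) = m := by omega
      rw [h1, h2, if_pos ⟨m, hm⟩, hdiv]
      have hβm : (β m : ℂ) ≠ 0 := by
        exact_mod_cast (hβ m).ne'
      rw [RCLike.inner_apply', div_eq_mul_inv, ← mul_assoc]
      have hz : (starRingEnd ℂ) (f (n, -m)) * f (n, -m) = ((‖f (n, -m)‖ ^ 2 : ℝ) : ℂ) := by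
        rw [← Complex.normSq_eq_conj_mul_self, Complex.normSq_eq_norm_sq]
      rw [hz]
      push_cast
      rw [show ((β m : ℂ) + (β m : ℂ)) = 2 * (β m : ℂ) by ring, mul_inv]
      ring
    · rw [if_neg hn]
      simp only [zero_mul, Complex.ofReal_zero]
      have hn' : n % 2 = 1 := Int.not_even_iff.mp hn
      rw [tsum_congr (fun k => key n k (by omega)), tsum_zero]
  have hmain : inner (𝕜 := ℂ) (Θ f) g =
      (((1 / 2) * ∑' n : ℤ,
        (if Even n then ‖f (n, -(n / 2))‖ ^ 2 * (β (n / 2))⁻¹ else 0) : ℝ) : ℂ) := by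
    rw [hinner]
    have : (∑' n : ℤ, ∑' k : ℤ, (inner ℂ ((Θ f) (n, k)) (g (n, k)) : ℂ)) =
        ∑' n : ℤ, (((if Even n then ‖f (n, -(n / 2))‖ ^ 2 * (β (n / 2))⁻¹ else 0 : ℝ)
          * (1 / 2) : ℝ) : ℂ) := by
      exact tsum_congr hrow
    rw [this, ← Complex.ofReal_tsum, tsum_mul_right]
    push_cast
    ring
  refine ⟨hmain, ?_⟩
  apply mul_nonneg (by norm_num)
  apply tsum_nonneg
  intro n
  split
  · exact mul_nonneg (sq_nonneg _) (inv_nonneg.mpr (hβ _).le)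
  · exact le_refl 0
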